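/- If A₁ and A₂ are finite nonempty subsets of ℤ with indicator functions 1_{A₁}, 1_{A₂}, then the convolution 1_{A₁} ⋆ 1_{A₂} is majorized by 1_{I₁} ⋆ 1_{I₂}, where I₁ = {0,1,...,|A₁|−1} and I₂ = {0,1,...,|A₂|−1}. -/

import Mathlib

noncomputable section

def Majorized (f g : ℤ → ℝ) : Prop :=
  (∀ s : Finset ℤ, ∃ t : Finset ℤ, t.card = s.card ∧ ∑ i ∈ s, f i ≤ ∑ i ∈ t, g i)
  ∧ ∑' i, f i = ∑' i, g i

def conv (f g : ℤ → ℝ) : ℤ → ℝ := fun k => ∑' i, f i * g (k - i)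

/-- Real-valued indicator function of a finite set of integers. -/
def ind (A : Finset ℤ) : ℤ → ℝ := fun i => if i ∈ A then 1 else 0

/-- Indicator of the interval `{0, 1, …, n-1}`. -/
def indInterval (n : ℕ) : ℤ → ℝ := fun i => if 0 ≤ i ∧ i < (n : ℤ) then 1 else 0

namespace MajAux

open Finset

/-- rank of `a` inside `A`: number of elements of `A` below `a`. -/
def rk (A : Finset ℤ) (a : ℤ) : ℕ := (A.filter (· < a)).card

lemma rk_lt_card {A : Finset ℤ} {a : ℤ} (ha : a ∈ A) : rk A a < A.card := by
  refine Finset.card_lt_card ⟨Finset.filter_subset _ _, fun h => ?_⟩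
  have := (Finset.mem_filter.mp (h ha)).2
  omega

lemma rk_strict {A : Finset ℤ} {a b : ℤ} (ha : a ∈ A) (h : a < b) : rk A a < rk A b := by
  refine Finset.card_lt_card ?_
  refine (Finset.ssubset_iff_of_subset ?_).mpr ⟨a, ?_, ?_⟩
  · intro x hx
    rw [Finset.mem_filter] at hx ⊢
    exact ⟨hx.1, hx.2.trans h⟩
  · exact Finset.mem_filter.mpr ⟨ha, h⟩
  · intro hx
    have := (Finset.mem_filter.mp hx).2
    omega

lemma le_of_rk_le {A : Finset ℤ} {a b : ℤ} (ha : a ∈ A) (hb : b ∈ A)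
    (h : rk A a ≤ rk A b) : a ≤ b := by
  by_contra hab
  push_neg at hab
  exact absurd h (not_le.mpr (rk_strict hb hab))

lemma rk_inj {A : Finset ℤ} {a b : ℤ} (ha : a ∈ A) (hb : b ∈ A)
    (h : rk A a = rk A b) : a = b :=
  le_antisymm (le_of_rk_le ha hb h.le) (le_of_rk_le hb ha h.ge)

/-- chain (hook) index of a lattice point. -/
def phi (A B : Finset ℤ) (p : ℤ × ℤ) : ℕ := min (rk A p.1) (B.card - 1 - rk B p.2)

lemma chain {A B : Finset ℤ} {p q : ℤ × ℤ} (hp : p ∈ A ×ˢ B) (hq : q ∈ A ×ˢ B)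
    (h : phi A B p = phi A B q) :
    (p.1 ≤ q.1 ∧ p.2 ≤ q.2) ∨ (q.1 ≤ p.1 ∧ q.2 ≤ p.2) := by
  rw [Finset.mem_product] at hp hq
  have h1 := rk_lt_card hp.2
  have h2 := rk_lt_card hq.2
  unfold phi at h
  have hkey : (rk A p.1 ≤ rk A q.1 ∧ rk B p.2 ≤ rk B q.2) ∨
      (rk A q.1 ≤ rk A p.1 ∧ rk B q.2 ≤ rk B p.2) := by omega
  rcases hkey with ⟨h3, h4⟩ | ⟨h3, h4⟩
  · exact Or.inl ⟨le_of_rk_le hp.1 hq.1 h3, le_of_rk_le hp.2 hq.2 h4⟩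
  · exact Or.inr ⟨le_of_rk_le hq.1 hp.1 h3, le_of_rk_le hq.2 hp.2 h4⟩

lemma mem_unpack {A B s : Finset ℤ} {t : ℕ} {p : ℤ × ℤ}
    (hp : p ∈ ((A ×ˢ B).filter fun p => p.1 + p.2 ∈ s).filter fun p => phi A B p = t) :
    p ∈ A ×ˢ B ∧ p.1 + p.2 ∈ s ∧ phi A B p = t := by
  rw [Finset.mem_filter, Finset.mem_filter] at hp
  exact ⟨hp.1.1, hp.1.2, hp.2⟩

lemma count_le (A B s : Finset ℤ) (t : ℕ) :
    (((A ×ˢ B).filter fun p => p.1 + p.2 ∈ s).filter fun p => phi A B p = t).card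
      ≤ min s.card (A.card + B.card - 1 - 2 * t) := by
  refine le_min ?_ ?_
  · refine Finset.card_le_card_of_injOn (fun p => p.1 + p.2) (fun p hp => (mem_unpack hp).2.1) ?_
    intro p hp q hq hpq
    simp only [Finset.mem_coe] at hp hq
    obtain ⟨hp1, _, hp3⟩ := mem_unpack hp
    obtain ⟨hq1, _, hq3⟩ := mem_unpack hq
    have hch := chain hp1 hq1 (hp3.trans hq3.symm)
    have hpq' : p.1 + p.2 = q.1 + q.2 := hpq
    have hfst : p.1 = q.1 ∧ p.2 = q.2 := by omega
    exact Prod.ext hfst.1 hfst.2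
  · rcases (((A ×ˢ B).filter fun p => p.1 + p.2 ∈ s).filter
        fun p => phi A B p = t).eq_empty_or_nonempty with he | ⟨p0, hp0⟩
    · rw [he]; simp
    · obtain ⟨hp01, _, hp03⟩ := mem_unpack hp0
      rw [Finset.mem_product] at hp01
      have ha1 := rk_lt_card hp01.1
      have ha2 := rk_lt_card hp01.2
      have htAB : t < A.card ∧ t < B.card := by
        unfold phi at hp03; omega
      have hIcc : (Finset.Icc t (A.card + B.card - 2 - t)).card
          = A.card + B.card - 1 - 2 * t := by
        rw [Nat.card_Icc]; omega
      rw [← hIcc]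
      refine Finset.card_le_card_of_injOn (fun p => rk A p.1 + rk B p.2) ?_ ?_
      · intro p hp
        obtain ⟨hp1, _, hp3⟩ := mem_unpack hp
        rw [Finset.mem_product] at hp1
        have h1 := rk_lt_card hp1.1
        have h2 := rk_lt_card hp1.2
        have hb : (fun p : ℤ × ℤ => rk A p.1 + rk B p.2) p = rk A p.1 + rk B p.2 := rfl
        rw [hb, Finset.mem_coe, Finset.mem_Icc]
        unfold phi at hp3
        omega
      · intro p hp q hq hpq
        simp only [Finset.mem_coe] at hp hq
        obtain ⟨hp1, _, hp3⟩ := mem_unpack hp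
        obtain ⟨hq1, _, hq3⟩ := mem_unpack hq
        have hpq' : rk A p.1 + rk B p.2 = rk A q.1 + rk B q.2 := hpq
        rcases chain hp1 hq1 (hp3.trans hq3.symm) with ⟨h3, h4⟩ | ⟨h3, h4⟩
        · rw [Finset.mem_product] at hp1 hq1
          have r1 : rk A p.1 ≤ rk A q.1 := Finset.card_le_card (fun x hx => by
            rw [Finset.mem_filter] at hx ⊢; exact ⟨hx.1, lt_of_lt_of_le hx.2 h3⟩)
          have r2 : rk B p.2 ≤ rk B q.2 := Finset.card_le_card (fun x hx => by
            rw [Finset.mem_filter] at hx ⊢; exact ⟨hx.1, lt_of_lt_of_le hx.2 h4⟩)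
          have e1 : rk A p.1 = rk A q.1 := by omega
          have e2 : rk B p.2 = rk B q.2 := by omega
          exact Prod.ext (rk_inj hp1.1 hq1.1 e1) (rk_inj hp1.2 hq1.2 e2)
        · rw [Finset.mem_product] at hp1 hq1
          have r1 : rk A q.1 ≤ rk A p.1 := Finset.card_le_card (fun x hx => by
            rw [Finset.mem_filter] at hx ⊢; exact ⟨hx.1, lt_of_lt_of_le hx.2 h3⟩)
          have r2 : rk B q.2 ≤ rk B p.2 := Finset.card_le_card (fun x hx => by
            rw [Finset.mem_filter] at hx ⊢; exact ⟨hx.1, lt_of_lt_of_le hx.2 h4⟩)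
          have e1 : rk A p.1 = rk A q.1 := by omega
          have e2 : rk B p.2 = rk B q.2 := by omega
          exact Prod.ext (rk_inj hp1.1 hq1.1 e1) (rk_inj hp1.2 hq1.2 e2)

lemma rk_Ico {n : ℕ} {x : ℤ} (h0 : 0 ≤ x) (hn : x ≤ n) :
    rk (Finset.Ico (0 : ℤ) (n : ℤ)) x = x.toNat := by
  unfold rk
  have h : (Finset.Ico (0 : ℤ) (n : ℤ)).filter (· < x) = Finset.Ico (0 : ℤ) x := by
    ext y
    simp only [Finset.mem_filter, Finset.mem_Ico]
    omega
  rw [h, Int.card_Ico]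
  omega

lemma count_ge (n₁ n₂ : ℕ) (c : ℤ) (m : ℕ)
    (hc1 : (n₁ : ℤ) + n₂ - 1 - m ≤ 2 * c) (hc2 : 2 * c ≤ (n₁ : ℤ) + n₂ - m)
    (t : ℕ) (ht1 : t < n₁) (ht2 : t < n₂) :
    min m (n₁ + n₂ - 1 - 2 * t)
      ≤ ((((Finset.Ico (0 : ℤ) (n₁ : ℤ)) ×ˢ (Finset.Ico (0 : ℤ) (n₂ : ℤ))).filter
            (fun p => p.1 + p.2 ∈ Finset.Ico c (c + m))).filter
          (fun p => phi (Finset.Ico (0 : ℤ) (n₁ : ℤ)) (Finset.Ico (0 : ℤ) (n₂ : ℤ)) p = t)).card := by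
  have hn2card : (Finset.Ico (0 : ℤ) (n₂ : ℤ)).card = n₂ := by
    rw [Int.card_Ico]; omega
  set K : Finset ℤ := Finset.Icc (t : ℤ) ((n₁ : ℤ) + n₂ - 2 - t) ∩ Finset.Ico c (c + m) with hK
  have hKcard : min m (n₁ + n₂ - 1 - 2 * t) ≤ K.card := by
    have h1 : K = Finset.Ico (max (t : ℤ) c) (min ((n₁ : ℤ) + n₂ - 1 - t) (c + m)) := by
      ext y
      simp only [hK, Finset.mem_inter, Finset.mem_Icc, Finset.mem_Ico, max_le_iff, lt_min_iff]
      omega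
    rw [h1, Int.card_Ico]
    rcases le_total ((n₁ : ℤ) + n₂ - 1 - t) (c + m) with h' | h'
    · rw [min_eq_left h']
      rcases le_total (t : ℤ) c with h | h
      · rw [max_eq_right h]; omega
      · rw [max_eq_left h]; omega
    · rw [min_eq_right h']
      rcases le_total (t : ℤ) c with h | h
      · rw [max_eq_right h]; omega
      · rw [max_eq_left h]; omega
  refine hKcard.trans ?_
  refine Finset.card_le_card_of_injOn
    (fun k => if k < (n₂ : ℤ) then ((t : ℤ), k - t) else (k - n₂ + 1 + t, (n₂ : ℤ) - 1 - t)) ?_ ?_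
  · intro k hk
    simp only [Finset.mem_coe, hK, Finset.mem_inter, Finset.mem_Icc, Finset.mem_Ico] at hk
    obtain ⟨⟨hk1, hk2⟩, hk3, hk4⟩ := hk
    rw [Finset.mem_coe, Finset.mem_filter, Finset.mem_filter]
    beta_reduce
    by_cases hcase : k < (n₂ : ℤ)
    · rw [if_pos hcase]
      refine ⟨⟨?_, ?_⟩, ?_⟩
      · rw [Finset.mem_product]
        constructor <;> simp only [Finset.mem_Ico] <;> omega
      · simp only [Finset.mem_Ico]; omega
      · unfold phi
        rw [rk_Ico (by omega) (by omega), rk_Ico (by omega) (by omega), hn2card]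
        omega
    · rw [if_neg hcase]
      refine ⟨⟨?_, ?_⟩, ?_⟩
      · rw [Finset.mem_product]
        constructor <;> simp only [Finset.mem_Ico] <;> omega
      · simp only [Finset.mem_Ico]; omega
      · unfold phi
        rw [rk_Ico (by omega) (by omega), rk_Ico (by omega) (by omega), hn2card]
        omega
  · intro k hk k' hk' heq
    simp only [Finset.mem_coe, hK, Finset.mem_inter, Finset.mem_Icc, Finset.mem_Ico] at hk hk'
    beta_reduce at heq
    rw [Prod.ext_iff] at heq
    split_ifs at heq <;> simp only at heq <;> omega

lemma card_fiberwise (A B s : Finset ℤ) :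
    ((A ×ˢ B).filter fun p => p.1 + p.2 ∈ s).card
      = ∑ t ∈ Finset.range (min A.card B.card),
          (((A ×ˢ B).filter fun p => p.1 + p.2 ∈ s).filter fun p => phi A B p = t).card := by
  refine Finset.card_eq_sum_card_fiberwise fun p hp => ?_
  rw [Finset.mem_coe, Finset.mem_filter] at hp
  have hm := Finset.mem_product.mp hp.1
  have h1 := rk_lt_card hm.1
  have h2 := rk_lt_card hm.2
  simp only [Finset.mem_coe, Finset.mem_range]
  unfold phi
  omega

lemma main_count (A B s : Finset ℤ) (c : ℤ)
    (hc1 : (A.card : ℤ) + B.card - 1 - s.card ≤ 2 * c)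
    (hc2 : 2 * c ≤ (A.card : ℤ) + B.card - s.card) :
    ((A ×ˢ B).filter fun p => p.1 + p.2 ∈ s).card
      ≤ (((Finset.Ico (0 : ℤ) (A.card : ℤ)) ×ˢ (Finset.Ico (0 : ℤ) (B.card : ℤ))).filter
          fun p => p.1 + p.2 ∈ Finset.Ico c (c + s.card)).card := by
  have hI1 : (Finset.Ico (0 : ℤ) (A.card : ℤ)).card = A.card := by rw [Int.card_Ico]; omega
  have hI2 : (Finset.Ico (0 : ℤ) (B.card : ℤ)).card = B.card := by rw [Int.card_Ico]; omega
  rw [card_fiberwise A B s,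
    card_fiberwise (Finset.Ico (0 : ℤ) (A.card : ℤ)) (Finset.Ico (0 : ℤ) (B.card : ℤ))
      (Finset.Ico c (c + s.card)), hI1, hI2]
  refine Finset.sum_le_sum fun t ht => ?_
  rw [Finset.mem_range] at ht
  refine (count_le A B s t).trans ?_
  exact count_ge A.card B.card c s.card hc1 hc2 t (by omega) (by omega)

lemma conv_ind_apply (A B : Finset ℤ) (k : ℤ) :
    conv (ind A) (ind B) k = ((A.filter fun i => k - i ∈ B).card : ℝ) := by
  unfold conv
  rw [tsum_eq_sum (s := A) (fun b hb => by simp [ind, hb])]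
  rw [Finset.card_filter]
  push_cast
  refine Finset.sum_congr rfl fun i hi => ?_
  simp [ind, hi]

lemma count_eq (A B s : Finset ℤ) :
    ∑ k ∈ s, (A.filter fun i => k - i ∈ B).card
      = ((A ×ˢ B).filter fun p => p.1 + p.2 ∈ s).card := by
  rw [Finset.card_filter, Finset.sum_product]
  simp_rw [Finset.card_filter]
  rw [Finset.sum_comm]
  refine Finset.sum_congr rfl fun i hi => ?_
  have h1 : (∑ k ∈ s, if k - i ∈ B then 1 else 0)
      = (s.filter fun k => k - i ∈ B).card := (Finset.card_filter _ _).symm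
  have h2 : (∑ j ∈ B, if i + j ∈ s then 1 else 0)
      = (B.filter fun j => i + j ∈ s).card := (Finset.card_filter _ _).symm
  rw [h1, h2]
  refine Finset.card_bij (fun k _ => k - i) ?_ ?_ ?_
  · intro k hk
    rw [Finset.mem_filter] at hk ⊢
    refine ⟨hk.2, ?_⟩
    have : i + (k - i) = k := by ring
    rw [this]; exact hk.1
  · intro a ha b hb hab
    have : a - i = b - i := hab
    omega
  · intro j hj
    rw [Finset.mem_filter] at hj
    refine ⟨i + j, ?_, by ring⟩
    rw [Finset.mem_filter]
    have : i + j - i = j := by ring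
    rw [this]
    exact ⟨hj.2, hj.1⟩

lemma sum_conv_ind (A B s : Finset ℤ) :
    ∑ k ∈ s, conv (ind A) (ind B) k
      = (((A ×ˢ B).filter fun p => p.1 + p.2 ∈ s).card : ℝ) := by
  rw [← count_eq]
  push_cast
  exact Finset.sum_congr rfl fun k _ => conv_ind_apply A B k

open Pointwise in
lemma tsum_conv_ind (A B : Finset ℤ) :
    ∑' k, conv (ind A) (ind B) k = ((A.card * B.card : ℕ) : ℝ) := by
  rw [tsum_eq_sum (s := A + B) ?hv]
  case hv =>
    intro k hk
    rw [conv_ind_apply]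
    norm_cast
    rw [Finset.card_eq_zero, Finset.filter_eq_empty_iff]
    intro i hi hib
    refine hk ?_
    have := Finset.add_mem_add hi hib
    simpa using this
  rw [sum_conv_ind]
  norm_cast
  rw [Finset.filter_true_of_mem, Finset.card_product]
  intro p hp
  have hm := Finset.mem_product.mp hp
  exact Finset.add_mem_add hm.1 hm.2

lemma ind_interval_eq (n : ℕ) : indInterval n = ind (Finset.Ico (0 : ℤ) (n : ℤ)) := by
  funext i
  simp [indInterval, ind, Finset.mem_Ico]

end MajAux

theorem indicator_conv_majorized (A₁ A₂ : Finset ℤ) (h₁ : A₁.Nonempty) (h₂ : A₂.Nonempty) :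
    Majorized (conv (ind A₁) (ind A₂)) (conv (indInterval A₁.card) (indInterval A₂.card)) := by
  have e₁ := MajAux.ind_interval_eq A₁.card
  have e₂ := MajAux.ind_interval_eq A₂.card
  have hI1 : (Finset.Ico (0 : ℤ) (A₁.card : ℤ)).card = A₁.card := by rw [Int.card_Ico]; omega
  have hI2 : (Finset.Ico (0 : ℤ) (A₂.card : ℤ)).card = A₂.card := by rw [Int.card_Ico]; omega
  constructor
  · intro s
    set m := s.card with hm
    set c : ℤ := ((A₁.card : ℤ) + A₂.card - m) / 2 with hc
    refine ⟨Finset.Ico c (c + m), ?_, ?_⟩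
    · rw [Int.card_Ico]; omega
    · rw [MajAux.sum_conv_ind, e₁, e₂, MajAux.sum_conv_ind]
      have := MajAux.main_count A₁ A₂ s c (by omega) (by omega)
      exact_mod_cast this
  · rw [MajAux.tsum_conv_ind, e₁, e₂, MajAux.tsum_conv_ind, hI1, hI2]
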